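/- Per-chunk upper bound on the global BH index (inequality (4) of the paper): let C be the disjoint union of chunks C_1,…,C_c with |C_i| = m_i and |C| = m, let r_C = max{i ∈ {1,…,m} : p_(i:C) < i·α/m} (0 if none), and for each chunk let r*_{C_i} = max{r ∈ {1,…,m_i} : p_(r:C_i) < (r + m − m_i)·α/m} (0 if none). Then r_C ≤ r*_{C_i} + m − m_i for every i = 1,…,c. -/

import Mathlib

open scoped Classical

/-- `#S(t)`: the number of elements of the multiset `C` that are strictly less than `t`. -/
noncomputable def countBelow (C : Multiset ℝ) (t : ℝ) : ℕ :=
  (C.filter (fun p => p < t)).card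

/-- The `k`-th smallest element (1-indexed order statistic, with multiplicity) of `D`. -/
noncomputable def orderStat (D : Multiset ℝ) (k : ℕ) : ℝ :=
  (D.sort (· ≤ ·)).getD (k - 1) 0

/-- The Benjamini–Hochberg index at level `α`:
`max {i ∈ {1,…,m} : p_(i) < i·α/m}`, with value `0` if this set is empty. -/
noncomputable def rBH (α : ℝ) (C : Multiset ℝ) : ℕ :=
  ((Finset.Icc 1 C.card).filter
    (fun i => orderStat C i < (i : ℝ) * α / (C.card : ℝ))).sup id

/-- The chunk-level BH index of the chunk `D` inside a total problem of `m` p-values: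
`max {r ∈ {1,…,|D|} : p_(r:D) < (r + m − |D|)·α/m}`, with value `0` if this set is empty. -/
noncomputable def rStarChunk (α : ℝ) (m : ℕ) (D : Multiset ℝ) : ℕ :=
  ((Finset.Icc 1 D.card).filter
    (fun r => orderStat D r < ((r + m - D.card : ℕ) : ℝ) * α / (m : ℝ))).sup id

lemma sorted_key (l : List ℝ) (hl : l.Pairwise (· ≤ ·)) (r : ℕ) (hr1 : 1 ≤ r)
    (hr : r ≤ l.length) (t : ℝ) :
    l.getD (r-1) 0 < t ↔ r ≤ (l.filter (fun p => p < t)).length := by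
  have hlt : r - 1 < l.length := by omega
  have hmono : ∀ (i j : ℕ) (hij : i ≤ j) (hj : j < l.length), l[i]'(Nat.lt_of_le_of_lt hij hj) ≤ l[j] := by
    intro i j hij hj
    rcases eq_or_lt_of_le hij with h' | h'
    · subst h'; exact le_refl _
    · exact (List.pairwise_iff_getElem.mp hl) i j (by omega) hj h'
  rw [List.getD_eq_getElem l 0 hlt]
  constructor
  · intro h
    have h1 : ∀ x ∈ l.take r, x < t := by
      intro x hx
      obtain ⟨i, hi, hix⟩ := List.mem_take_iff_getElem.mp hx
      have : l[i]'(by omega) ≤ l[r-1] := hmono i (r-1) (by omega) hlt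
      rw [← hix]
      exact lt_of_le_of_lt this h
    calc r = (l.take r).length := by rw [List.length_take]; omega
    _ = ((l.take r).filter (fun p => p < t)).length := by
          rw [List.filter_eq_self.mpr]; intro x hx; simpa using h1 x hx
    _ ≤ (l.filter (fun p => p < t)).length := by
          conv_rhs => rw [← List.take_append_drop r l]
          rw [List.filter_append, List.length_append]; omega
  · intro h
    by_contra hge
    push_neg at hge
    have h2 : ∀ x ∈ l.drop (r-1), ¬ (x < t) := by
      intro x hx
      obtain ⟨i, hi, hix⟩ := List.mem_iff_getElem.mp hx
      have hi' : r - 1 + i < l.length := by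
        rw [List.length_drop] at hi; omega
      rw [List.getElem_drop] at hix
      have : l[r-1] ≤ l[r-1+i]'hi' := hmono (r-1) (r-1+i) (by omega) hi'
      rw [← hix]; exact not_lt.mpr (le_trans hge this)
    have : (l.filter (fun p => p < t)).length ≤ r - 1 := by
      conv_lhs => rw [← List.take_append_drop (r-1) l]
      rw [List.filter_append, List.length_append]
      have h4 : ((l.drop (r-1)).filter (fun p => p < t)).length = 0 := by
        rw [List.length_eq_zero_iff, List.filter_eq_nil_iff]
        intro x hx; simpa using h2 x hx
      have h3 : ((l.take (r-1)).filter (fun p : ℝ => decide (p < t))).length ≤ (l.take (r-1)).length := List.length_filter_le _ _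
      rw [List.length_take] at h3; omega
    omega

lemma countBelow_eq (C : Multiset ℝ) (t : ℝ) :
    countBelow C t = ((C.sort (· ≤ ·)).filter (fun p => p < t)).length := by
  unfold countBelow
  conv_lhs => rw [← Multiset.sort_eq C (· ≤ ·)]
  rw [Multiset.filter_coe, Multiset.coe_card]

lemma orderStat_lt_iff (C : Multiset ℝ) (r : ℕ) (hr1 : 1 ≤ r) (hr : r ≤ C.card) (t : ℝ) :
    orderStat C r < t ↔ r ≤ countBelow C t := by
  rw [countBelow_eq]
  exact sorted_key _ (Multiset.pairwise_sort _ _) r hr1 (by simpa using hr) t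

lemma countBelow_add (A B : Multiset ℝ) (t : ℝ) :
    countBelow (A + B) t = countBelow A t + countBelow B t := by
  simp [countBelow, Multiset.filter_add]

lemma countBelow_sum {ι : Type*} (s : Finset ι) (f : ι → Multiset ℝ) (t : ℝ) :
    countBelow (∑ j ∈ s, f j) t = ∑ j ∈ s, countBelow (f j) t := by
  classical
  induction s using Finset.induction with
  | empty => simp [countBelow]
  | insert a s hx ih => simp [Finset.sum_insert hx, countBelow_add, ih]

lemma card_sum' {ι : Type*} (s : Finset ι) (f : ι → Multiset ℝ) :
    (∑ j ∈ s, f j).card = ∑ j ∈ s, (f j).card := by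
  classical
  induction s using Finset.induction with
  | empty => simp
  | insert a s hx ih => simp [Finset.sum_insert hx, ih]

lemma countBelow_le_card (A : Multiset ℝ) (t : ℝ) : countBelow A t ≤ A.card :=
  Multiset.card_le_card (Multiset.filter_le _ _)

/-- Per-chunk upper bound on the global BH index (inequality (4) of the
paper): if `C` is the disjoint union of the chunks `Ch 1, …, Ch c`, then
`r_C ≤ r*_{C_i} + m − m_i` for every chunk `i`. -/
theorem global_rBH_le_chunk_bound
    (α : ℝ) (hα0 : 0 < α) (hα1 : α < 1)
    (c : ℕ) (Ch : Fin c → Multiset ℝ)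
    (hvals : ∀ i, ∀ p ∈ Ch i, 0 ≤ p ∧ p ≤ 1)
    (C : Multiset ℝ) (hC : C = ∑ i, Ch i)
    (m : ℕ) (hm : m = C.card) :
    ∀ i : Fin c, rBH α C ≤ rStarChunk α m (Ch i) + m - (Ch i).card := by
  intro i
  set mi := (Ch i).card with hmi
  -- m = sum of cards, and mi ≤ m
  have hcard : m = ∑ j, (Ch j).card := by
    rw [hm, hC]; exact card_sum' _ _
  have hsplit : ∑ j, (Ch j).card = mi + ∑ j ∈ Finset.univ.erase i, (Ch j).card := by
    rw [← Finset.add_sum_erase _ _ (Finset.mem_univ i)]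
  have hmile : mi ≤ m := by omega
  by_cases hr0 : rBH α C = 0
  · rw [hr0]; omega
  -- extract membership
  have hne : ((Finset.Icc 1 C.card).filter
      (fun j => orderStat C j < (j : ℝ) * α / (C.card : ℝ))).Nonempty := by
    by_contra h
    rw [Finset.not_nonempty_iff_eq_empty] at h
    exact hr0 (by simp [rBH, h])
  obtain ⟨r, hrmem, hrsup⟩ := Finset.exists_mem_eq_sup _ hne id
  rw [Finset.mem_filter, Finset.mem_Icc] at hrmem
  obtain ⟨⟨hr1, hrm⟩, hrlt⟩ := hrmem
  have hrBH : rBH α C = r := hrsup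
  rw [hrBH]
  rw [← hm] at hrm hrlt
  set t : ℝ := (r : ℝ) * α / (m : ℝ) with ht
  -- count argument
  have hcb : r ≤ countBelow C t := by
    rw [← orderStat_lt_iff C r hr1 (by omega)]
    exact hrlt
  have hcbsum : countBelow C t = countBelow (Ch i) t
      + ∑ j ∈ Finset.univ.erase i, countBelow (Ch j) t := by
    rw [hC, countBelow_sum, ← Finset.add_sum_erase _ _ (Finset.mem_univ i)]
  have hrest : ∑ j ∈ Finset.univ.erase i, countBelow (Ch j) t
      ≤ ∑ j ∈ Finset.univ.erase i, (Ch j).card :=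
    Finset.sum_le_sum (fun j _ => countBelow_le_card _ _)
  have hkey : r ≤ countBelow (Ch i) t + (m - mi) := by omega
  by_cases hsmall : r ≤ m - mi
  · omega
  push_neg at hsmall
  set k := r - (m - mi) with hk
  have hk1 : 1 ≤ k := by omega
  have hkmi : k ≤ mi := by omega
  have hcbi : k ≤ countBelow (Ch i) t := by omega
  have hos : orderStat (Ch i) k < t :=
    (orderStat_lt_iff (Ch i) k hk1 (by omega) t).mpr hcbi
  have hcast : ((k + m - mi : ℕ) : ℝ) = (r : ℝ) := by
    congr 1; omega
  have hkmem : k ∈ (Finset.Icc 1 (Ch i).card).filter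
      (fun s => orderStat (Ch i) s < ((s + m - (Ch i).card : ℕ) : ℝ) * α / (m : ℝ)) := by
    rw [Finset.mem_filter, Finset.mem_Icc]
    refine ⟨⟨hk1, hkmi⟩, ?_⟩
    rw [← hmi, hcast]
    exact hos
  have : k ≤ rStarChunk α m (Ch i) := Finset.le_sup (f := id) hkmem
  omega
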